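/- Suppose f: R^n → R is differentiable with blockwise Lipschitz constant L_i for block i (i.e., ‖∇_i f(x + U_i h) − ∇_i f(x)‖ ≤ L_i‖h‖ for all h), ψ is convex, and H_i ⪰ c_i I with c_i ∈ (0, L_i]. Then for α̂ = c_i/L_i and any d_i and any α ∈ [0, α̂], F(x + α U_i d_i) − F(x) ≤ α Q_i(d_i), where Q_i(d_i) = ∇_i f(x)^T d_i + (1/2) d_i^T H_i d_i + ψ(x + U_i d_i) − ψ(x). -/

import Mathlib

open scoped RealInnerProductSpace
open InnerProductSpace

theorem grad_trans' {n ni : ℕ}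
    (f : EuclideanSpace ℝ (Fin n) → ℝ)
    (U : EuclideanSpace ℝ (Fin ni) →ₗᵢ[ℝ] EuclideanSpace ℝ (Fin n))
    (gi : EuclideanSpace ℝ (Fin n) → EuclideanSpace ℝ (Fin ni))
    (hgrad : ∀ z, HasGradientAt (fun h : EuclideanSpace ℝ (Fin ni) => f (z + U h)) (gi z) 0)
    (x : EuclideanSpace ℝ (Fin n)) (h₀ : EuclideanSpace ℝ (Fin ni)) :
    HasFDerivAt (fun h : EuclideanSpace ℝ (Fin ni) => f (x + U h))
      (toDual ℝ _ (gi (x + U h₀))) h₀ := by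
  have h1 : HasFDerivAt (fun h : EuclideanSpace ℝ (Fin ni) => f (x + U h₀ + U h))
      (toDual ℝ _ (gi (x + U h₀))) 0 := hasGradientAt_iff_hasFDerivAt.mp (hgrad (x + U h₀))
  have h2 : HasFDerivAt (fun h : EuclideanSpace ℝ (Fin ni) => h - h₀)
      (ContinuousLinearMap.id ℝ _) h₀ := (hasFDerivAt_id h₀).sub_const h₀
  have h1' : HasFDerivAt (fun h : EuclideanSpace ℝ (Fin ni) => f (x + U h₀ + U h))
      (toDual ℝ _ (gi (x + U h₀))) (h₀ - h₀) := by rw [sub_self]; exact h1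
  have h3 := h1'.comp (f := fun h => h - h₀) h₀ h2
  have heq : (fun h : EuclideanSpace ℝ (Fin ni) => f (x + U h))
      = (fun h : EuclideanSpace ℝ (Fin ni) => f (x + U h₀ + U h)) ∘ (fun h => h - h₀) := by
    funext h
    simp only [Function.comp_apply, map_sub]
    congr 1
    abel
  rw [heq]
  simpa using h3

theorem descent' {n ni : ℕ}
    (f : EuclideanSpace ℝ (Fin n) → ℝ)
    (U : EuclideanSpace ℝ (Fin ni) →ₗᵢ[ℝ] EuclideanSpace ℝ (Fin n))
    (gi : EuclideanSpace ℝ (Fin n) → EuclideanSpace ℝ (Fin ni))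
    (hgrad : ∀ z, HasGradientAt (fun h : EuclideanSpace ℝ (Fin ni) => f (z + U h)) (gi z) 0)
    (L : ℝ) (hL : 0 < L)
    (hLip : ∀ z h, ‖gi (z + U h) - gi z‖ ≤ L * ‖h‖)
    (x : EuclideanSpace ℝ (Fin n)) (h : EuclideanSpace ℝ (Fin ni)) :
    f (x + U h) - f x ≤ ⟪gi x, h⟫ + L / 2 * ‖h‖ ^ 2 := by
  set D : ℝ → ℝ := fun t => L * ‖h‖ ^ 2 * t ^ 2 / 2 - (f (x + U (t • h)) - t * ⟪gi x, h⟫) with hD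
  have hderiv : ∀ t : ℝ, HasDerivAt D
      (L * ‖h‖ ^ 2 * t - (⟪gi (x + U (t • h)), h⟫ - ⟪gi x, h⟫)) t := by
    intro t
    have hcurve : HasDerivAt (fun t : ℝ => t • h) h t := by
      simpa using (hasDerivAt_id t).smul_const h
    have hφ : HasDerivAt (fun t : ℝ => f (x + U (t • h))) ⟪gi (x + U (t • h)), h⟫ t := by
      have := (grad_trans' f U gi hgrad x (t • h)).comp_hasDerivAt t hcurve
      simp only [Function.comp_def, toDual_apply_apply] at this
      exact this
    have h1 : HasDerivAt (fun t : ℝ => L * ‖h‖ ^ 2 * t ^ 2 / 2) (L * ‖h‖ ^ 2 * t) t := by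
      have := ((hasDerivAt_pow 2 t).const_mul (L * ‖h‖ ^ 2)).div_const 2
      convert this using 1
      all_goals first | rfl | ring
    have h2 : HasDerivAt (fun t : ℝ => t * ⟪gi x, h⟫) ⟪gi x, h⟫ t := by
      simpa using (hasDerivAt_id t).mul_const (⟪gi x, h⟫)
    exact h1.sub (hφ.sub h2)
  have hcont : ContinuousOn D (Set.Icc 0 1) :=
    fun t _ => ((hderiv t).continuousAt).continuousWithinAt
  have hmono : MonotoneOn D (Set.Icc 0 1) := by
    apply monotoneOn_of_deriv_nonneg (convex_Icc 0 1) hcont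
    · intro t ht
      exact ((hderiv t).differentiableAt).differentiableWithinAt
    · intro t ht
      rw [interior_Icc] at ht
      rw [(hderiv t).deriv]
      have hb : ⟪gi (x + U (t • h)) - gi x, h⟫ ≤ L * t * ‖h‖ ^ 2 := by
        calc ⟪gi (x + U (t • h)) - gi x, h⟫ ≤ ‖gi (x + U (t • h)) - gi x‖ * ‖h‖ :=
              real_inner_le_norm _ _
          _ ≤ L * ‖t • h‖ * ‖h‖ := by
              have := hLip x (t • h)
              nlinarith [norm_nonneg h]
          _ = L * t * ‖h‖ ^ 2 := by
              rw [norm_smul]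
              simp [abs_of_pos ht.1]
              ring
      rw [inner_sub_left] at hb
      nlinarith [hb]
  have key := hmono (Set.mem_Icc.mpr ⟨le_refl 0, zero_le_one⟩)
      (Set.mem_Icc.mpr ⟨zero_le_one, le_refl 1⟩) zero_le_one
  have e0 : D 0 = -f x := by simp [hD]
  have e1 : D 1 = L * ‖h‖ ^ 2 / 2 - (f (x + U h) - ⟪gi x, h⟫) := by simp [hD]
  rw [e0, e1] at key
  linarith

/-- With blockwise `L`-Lipschitz partial gradient for block `i`
(embedding `U`, a linear isometry, i.e. a column submatrix of the identity),
`ψ` convex, and `c I ⪯ H` with `0 < c ≤ L`, for `α̂ = c/L`, any `d` and any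
`α ∈ [0, α̂]`: `F(x + α U d) − F(x) ≤ α Q(d)` where
`Q(d) = ⟪∇_i f(x), d⟫ + (1/2)⟪d, H d⟫ + ψ(x + U d) − ψ(x)`. -/
theorem stmt2 {n ni : ℕ}
    (f ψ : EuclideanSpace ℝ (Fin n) → ℝ)
    (hψ : ConvexOn ℝ Set.univ ψ)
    (F : EuclideanSpace ℝ (Fin n) → ℝ)
    (hF : ∀ y, F y = f y + ψ y)
    (U : EuclideanSpace ℝ (Fin ni) →ₗᵢ[ℝ] EuclideanSpace ℝ (Fin n))
    (gi : EuclideanSpace ℝ (Fin n) → EuclideanSpace ℝ (Fin ni))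
    (hgrad : ∀ z, HasGradientAt (fun h : EuclideanSpace ℝ (Fin ni) => f (z + U h)) (gi z) 0)
    (L : ℝ) (hL : 0 < L)
    (hLip : ∀ z h, ‖gi (z + U h) - gi z‖ ≤ L * ‖h‖)
    (H : EuclideanSpace ℝ (Fin ni) →ₗ[ℝ] EuclideanSpace ℝ (Fin ni))
    (c : ℝ) (hc0 : 0 < c) (hcL : c ≤ L)
    (hH : ∀ v, c * ‖v‖ ^ 2 ≤ ⟪v, H v⟫)
    (x : EuclideanSpace ℝ (Fin n))
    (Q : EuclideanSpace ℝ (Fin ni) → ℝ)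
    (hQ : ∀ d, Q d = ⟪gi x, d⟫ + (1 / 2) * ⟪d, H d⟫ + ψ (x + U d) - ψ x) :
    ∀ (d : EuclideanSpace ℝ (Fin ni)) (α : ℝ), 0 ≤ α → α ≤ c / L →
      F (x + α • (U d : EuclideanSpace ℝ (Fin n))) - F x ≤ α * Q d := by
  intro d α hα0 hα1
  have hα1' : α ≤ 1 := hα1.trans ((div_le_one hL).mpr hcL)
  have hαL : α * L ≤ c := by
    rw [le_div_iff₀ hL] at hα1; linarith
  -- descent part
  have hdesc := descent' f U gi hgrad L hL hLip x (α • d)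
  have hU : (U (α • d) : EuclideanSpace ℝ (Fin n)) = α • (U d : EuclideanSpace ℝ (Fin n)) :=
    U.map_smul α d
  rw [hU] at hdesc
  rw [real_inner_smul_right, norm_smul] at hdesc
  have hdesc' : f (x + α • (U d : EuclideanSpace ℝ (Fin n))) - f x
      ≤ α * ⟪gi x, d⟫ + L / 2 * α ^ 2 * ‖d‖ ^ 2 := by
    have : (‖α • d‖ : ℝ) = |α| * ‖d‖ := norm_smul α d ▸ rfl
    calc f (x + α • (U d : EuclideanSpace ℝ (Fin n))) - f x
        ≤ α * ⟪gi x, d⟫ + L / 2 * (|α| * ‖d‖) ^ 2 := hdesc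
      _ = α * ⟪gi x, d⟫ + L / 2 * α ^ 2 * ‖d‖ ^ 2 := by
          rw [mul_pow, sq_abs]; ring
  -- convexity part
  have hconv := hψ.2 (Set.mem_univ x) (Set.mem_univ (x + U d))
    (sub_nonneg.mpr hα1') hα0 (by ring)
  have hpt : (1 - α) • x + α • (x + (U d : EuclideanSpace ℝ (Fin n)))
      = x + α • (U d : EuclideanSpace ℝ (Fin n)) := by
    rw [smul_add, sub_smul, one_smul]; abel
  rw [hpt] at hconv
  -- combine
  have hHd := hH d
  rw [smul_eq_mul, smul_eq_mul] at hconv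
  have h1 : α * (c * ‖d‖ ^ 2) ≤ α * ⟪d, H d⟫ := mul_le_mul_of_nonneg_left hHd hα0
  have h2 : L / 2 * α ^ 2 * ‖d‖ ^ 2 ≤ α * (c * ‖d‖ ^ 2) / 2 := by
    nlinarith [sq_nonneg (‖d‖ : ℝ), mul_nonneg hα0 (sq_nonneg (‖d‖ : ℝ))]
  rw [hF, hF, hQ]
  nlinarith
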